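/- Let n ≥ 1, let m be offset data on Fin n, and let p be a surjection with domain Fin n, with reverse p̄. Then in the Laurent polynomial ring ℤ[T, T⁻¹] (LaurentPolynomial ℤ): the sum, over all surjections o with domain Fin n that refine p̄, of (−1)^{k(o)−1}·T^{w(o)}, equals (−1)^{n−1}·T^{−w(p)}. (This is the paper's identity Σ_{o refines p̄} (−1)^{k(o)−1} D^{−n_t(o)−n_a(o)+n_i(o)} = (−1)^{n_e} D^{n_t(p)+n_a(p)−n_i(p)}, since for a scheme with n vertices and n_e edges Euler's formula gives (−1)^{n−1} = (−1)^{n_e}.) -/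

import Mathlib

open scoped Classical

/-- A surjection of size `n`: a surjective function from `Fin n` onto some `Fin k`. -/
abbrev Surjs (n : ℕ) : Type :=
  {o : Σ k : Fin (n + 1), Fin n → Fin (k : ℕ) // Function.Surjective o.2}

namespace Surjs

variable {n : ℕ}

/-- The size `k(o)` of the image of the surjection. -/
def k (o : Surjs n) : ℕ := (o.1.1 : ℕ)

/-- The underlying function of the surjection. -/
def f (o : Surjs n) : Fin n → Fin o.k := o.1.2

/-- `o` refines `p` if `o x ≤ o y` implies `p x ≤ p y` for all `x, y`. -/
def Refines (o p : Surjs n) : Prop :=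
  ∀ x y : Fin n, o.f x ≤ o.f y → p.f x ≤ p.f y

/-- The reverse surjection `p̄`, given by `p̄ i = (k - 1) - p i`. -/
def rev (p : Surjs n) : Surjs n :=
  ⟨⟨p.1.1, fun i => (p.1.2 i).rev⟩, Fin.rev_involutive.surjective.comp p.2⟩

end Surjs

/-- For offset data `m` (multiplicity of offset edges from `i` to `j`, for `i < j`),
`wgt m o = Σ_{i<j} m i j · ε_o(i,j)` where `ε_o(i,j) = 1` if `o i > o j` and `-1`
otherwise; so `-wgt m o = n_t(o) + n_a(o) - n_i(o)`. -/
def wgt {n : ℕ} (m : Fin n → Fin n → ℕ) (o : Surjs n) : ℤ :=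
  ∑ i : Fin n, ∑ j : Fin n,
    if i < j then (m i j : ℤ) * (if o.f j < o.f i then 1 else -1) else 0

open LaurentPolynomial

namespace Surjs

variable {n : ℕ}

lemma val_succAbove {N : ℕ} (t : Fin (N+1)) (s : Fin N) :
    ((t.succAbove s : Fin (N+1)) : ℕ) = if (s:ℕ) < t then (s:ℕ) else (s:ℕ)+1 := by
  rw [Fin.succAbove]
  split_ifs with h1 h2 h2 <;> simp_all [Fin.lt_def]

lemma k_pos (o : Surjs n) (hn : 1 ≤ n) : 1 ≤ o.k :=
  (o.f ⟨0, hn⟩).pos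

lemma ext' {o₁ o₂ : Surjs n} (hk : o₁.k = o₂.k)
    (hf : ∀ x, ((o₁.f x : ℕ)) = (o₂.f x : ℕ)) : o₁ = o₂ := by
  obtain ⟨⟨k₁, f₁⟩, h₁⟩ := o₁
  obtain ⟨⟨k₂, f₂⟩, h₂⟩ := o₂
  have hkk : k₁ = k₂ := Fin.ext hk
  subst hkk
  simp only [Subtype.mk.injEq, Sigma.mk.inj_iff, heq_eq_eq, true_and]
  funext x
  exact Fin.ext (hf x)

def ins (o' : Surjs n) : Fin o'.k ⊕ Fin (o'.k + 1) → Surjs (n+1)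
  | Sum.inl t => ⟨⟨⟨o'.k, by have : o'.k < n + 1 := o'.1.1.isLt; omega⟩, Fin.snoc o'.1.2 t⟩, by
      intro y
      obtain ⟨i, hi⟩ := o'.2 y
      exact ⟨i.castSucc, by
        show Fin.snoc (α := fun _ => Fin o'.k) o'.1.2 t i.castSucc = y
        exact (Fin.snoc_castSucc (α := fun _ => Fin o'.k) (p := o'.1.2) (x := t) (i := i)).trans hi⟩⟩
  | Sum.inr t => ⟨⟨⟨o'.k + 1, by have : o'.k < n + 1 := o'.1.1.isLt; omega⟩,
      Fin.snoc (fun i => t.succAbove (o'.1.2 i)) t⟩, by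
      intro y
      rcases eq_or_ne y t with h | hy
      · exact ⟨Fin.last n, by
          show Fin.snoc (α := fun _ => Fin (o'.k+1)) (fun i => t.succAbove (o'.1.2 i)) t (Fin.last n) = y
          rw [Fin.snoc_last]; exact h.symm⟩
      · obtain ⟨s, hs⟩ := Fin.exists_succAbove_eq hy
        obtain ⟨i, hi⟩ := o'.2 s
        exact ⟨i.castSucc, by
          show Fin.snoc (α := fun _ => Fin (o'.k+1)) (fun i => t.succAbove (o'.1.2 i)) t i.castSucc = y
          rw [Fin.snoc_castSucc]
          exact show t.succAbove ((o'.1).snd i) = y by rw [hi, hs]⟩⟩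

@[simp] lemma k_ins_inl (o' : Surjs n) (t : Fin o'.k) : (ins o' (Sum.inl t)).k = o'.k := rfl

@[simp] lemma k_ins_inr (o' : Surjs n) (t : Fin (o'.k + 1)) :
    (ins o' (Sum.inr t)).k = o'.k + 1 := rfl

@[simp] lemma f_ins_inl_castSucc (o' : Surjs n) (t : Fin o'.k) (i : Fin n) :
    (ins o' (Sum.inl t)).f i.castSucc = o'.f i := by
  show (Fin.snoc (α := fun _ => Fin o'.k) o'.1.2 t) i.castSucc = _
  exact Fin.snoc_castSucc (α := fun _ => Fin o'.k) (p := o'.1.2) (x := t) (i := i)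

@[simp] lemma f_ins_inl_last (o' : Surjs n) (t : Fin o'.k) :
    (ins o' (Sum.inl t)).f (Fin.last n) = t := by
  show (Fin.snoc (α := fun _ => Fin o'.k) o'.1.2 t) (Fin.last n) = _
  exact Fin.snoc_last (α := fun _ => Fin o'.k) (p := o'.1.2) (x := t)

@[simp] lemma f_ins_inr_castSucc (o' : Surjs n) (t : Fin (o'.k + 1)) (i : Fin n) :
    (ins o' (Sum.inr t)).f i.castSucc = t.succAbove (o'.f i) := by
  show (Fin.snoc (α := fun _ => Fin (o'.k+1)) (fun i => t.succAbove (o'.1.2 i)) t) i.castSucc = _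
  rw [Fin.snoc_castSucc]; rfl

@[simp] lemma f_ins_inr_last (o' : Surjs n) (t : Fin (o'.k + 1)) :
    (ins o' (Sum.inr t)).f (Fin.last n) = t := by
  show (Fin.snoc (α := fun _ => Fin (o'.k+1)) (fun i => t.succAbove (o'.1.2 i)) t) (Fin.last n) = _
  rw [Fin.snoc_last]

def Ins : (Σ o' : Surjs n, Fin o'.k ⊕ Fin (o'.k + 1)) → Surjs (n+1) := fun x => ins x.1 x.2

lemma Ins_bijective : Function.Bijective (Ins (n := n)) := by
  constructor
  · rintro ⟨o₁, d₁⟩ ⟨o₂, d₂⟩ h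
    have hk : (ins o₁ d₁).k = (ins o₂ d₂).k := by rw [show ins o₁ d₁ = ins o₂ d₂ from h]
    have hv : ∀ x, ((ins o₁ d₁).f x : ℕ) = ((ins o₂ d₂).f x : ℕ) := fun x =>
      congrArg (fun o : Surjs (n+1) => ((o.f x : ℕ))) h
    rcases d₁ with t₁ | t₁ <;> rcases d₂ with t₂ | t₂
    · have hk' : o₁.k = o₂.k := hk
      have ho : o₁ = o₂ := ext' hk' (fun i => by simpa using hv i.castSucc)
      subst ho
      have ht : t₁ = t₂ := Fin.ext (by simpa using hv (Fin.last n))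
      rw [ht]
    · exfalso
      obtain ⟨i, hi⟩ := o₁.2 t₁
      have h1 := hv i.castSucc
      have h2 := hv (Fin.last n)
      simp only [f_ins_inl_castSucc, f_ins_inl_last, f_ins_inr_castSucc, f_ins_inr_last] at h1 h2
      rw [show o₁.f i = t₁ from hi, val_succAbove] at h1
      split_ifs at h1 <;> omega
    · exfalso
      obtain ⟨i, hi⟩ := o₂.2 t₂
      have h1 := hv i.castSucc
      have h2 := hv (Fin.last n)
      simp only [f_ins_inl_castSucc, f_ins_inl_last, f_ins_inr_castSucc, f_ins_inr_last] at h1 h2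
      rw [show o₂.f i = t₂ from hi, val_succAbove] at h1
      split_ifs at h1 <;> omega
    · have hk' : o₁.k = o₂.k := by
        have : o₁.k + 1 = o₂.k + 1 := hk
        omega
      have hlast : (t₁ : ℕ) = (t₂ : ℕ) := by simpa using hv (Fin.last n)
      have ho : o₁ = o₂ := by
        refine ext' hk' (fun i => ?_)
        have h1 := hv i.castSucc
        simp only [f_ins_inr_castSucc] at h1
        rw [val_succAbove, val_succAbove] at h1
        split_ifs at h1 <;> omega
      subst ho
      have ht : t₁ = t₂ := Fin.ext hlast
      rw [ht]
  · rintro ⟨⟨K, F⟩, hf⟩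
    set z := F (Fin.last n) with hz
    by_cases hcase : ∃ i : Fin n, F i.castSucc = z
    · obtain ⟨i0, hi0⟩ := hcase
      have hsurj' : Function.Surjective (fun i : Fin n => F i.castSucc) := by
        intro y
        obtain ⟨x, hx⟩ := hf y
        induction x using Fin.lastCases with
        | last => exact ⟨i0, by show F i0.castSucc = y; rw [hi0, hz]; exact hx⟩
        | cast j => exact ⟨j, hx⟩
      have hK : (K : ℕ) < n + 1 := by
        have := Fintype.card_le_of_surjective _ hsurj'
        simpa using Nat.lt_succ_of_le (by simpa using this)
      refine ⟨⟨⟨⟨⟨(K:ℕ), hK⟩, fun i => F i.castSucc⟩, hsurj'⟩, Sum.inl z⟩, ?_⟩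
      refine ext' rfl (fun x => ?_)
      induction x using Fin.lastCases with
      | last => simp only [Ins]; exact congrArg Fin.val (f_ins_inl_last (⟨⟨⟨(K:ℕ), hK⟩, fun i => F i.castSucc⟩, hsurj'⟩ : Surjs n) z)
      | cast j => simp only [Ins]; exact congrArg Fin.val (f_ins_inl_castSucc (⟨⟨⟨(K:ℕ), hK⟩, fun i => F i.castSucc⟩, hsurj'⟩ : Surjs n) z j)
    · push_neg at hcase
      have hK1 : 1 ≤ (K : ℕ) := z.pos
      have hKlt : (K : ℕ) < n + 2 := K.isLt
      set K' : ℕ := (K : ℕ) - 1 with hK'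
      have hKK : K' + 1 = (K : ℕ) := by omega
      have hgp : ∀ i : Fin n,
          (if (F i.castSucc : ℕ) < (z : ℕ) then (F i.castSucc : ℕ) else (F i.castSucc : ℕ) - 1) < K' := by
        intro i
        have h1 := (F i.castSucc).isLt
        have h2 := z.isLt
        have hne : (F i.castSucc : ℕ) ≠ (z : ℕ) := Fin.val_ne_of_ne (hcase i)
        split_ifs <;> omega
      set g : Fin n → Fin K' := fun i => ⟨_, hgp i⟩ with hg
      have hgs : Function.Surjective g := by
        intro y
        have hyK : (if (y:ℕ) < (z:ℕ) then (y:ℕ) else (y:ℕ)+1) < (K:ℕ) := by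
          have := y.isLt; split_ifs <;> omega
        obtain ⟨x, hx⟩ := hf ⟨_, hyK⟩
        have hxne : x ≠ Fin.last n := by
          intro hrfl
          rw [hrfl] at hx
          have hxv : ((F (Fin.last n)) : ℕ) = (if (y:ℕ) < (z:ℕ) then (y:ℕ) else (y:ℕ)+1) :=
            congrArg Fin.val hx
          have hzv : (z : ℕ) = ((F (Fin.last n)) : ℕ) := rfl
          split_ifs at hxv <;> omega
        obtain ⟨j, rfl⟩ := Fin.exists_castSucc_eq.mpr hxne
        refine ⟨j, Fin.ext ?_⟩
        have hw := congrArg Fin.val hx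
        simp only [hg] at hw ⊢
        split_ifs at hw ⊢ <;> omega
      refine ⟨⟨⟨⟨⟨K', by omega⟩, g⟩, hgs⟩, Sum.inr ⟨(z:ℕ), by show (z:ℕ) < K' + 1; omega⟩⟩, ?_⟩
      refine ext' (by show K' + 1 = (K:ℕ); omega) (fun x => ?_)
      induction x using Fin.lastCases with
      | last => simp only [Ins]; rw [f_ins_inr_last]; rfl
      | cast j =>
        show ((ins _ (Sum.inr _)).f j.castSucc : ℕ) = (F j.castSucc : ℕ)
        rw [f_ins_inr_castSucc, val_succAbove]
        show (if (g j : ℕ) < (z:ℕ) then (g j :ℕ) else (g j :ℕ)+1) = (F j.castSucc : ℕ)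
        have hne : (F j.castSucc : ℕ) ≠ (z : ℕ) := Fin.val_ne_of_ne (hcase j)
        simp only [hg]
        split_ifs <;> omega

end Surjs

open LaurentPolynomial

namespace Surjs

variable {n : ℕ}

lemma telescope {M : Type*} [AddCommMonoid M] (a : ℕ → M) (P : ℕ → Prop)
    (lo : ℕ) (hPlo : P lo) (hmin : ∀ t, t < lo → ¬ P t)
    (hdown : ∀ t, lo ≤ t → P (t+1) → P t) :
    ∀ K, lo ≤ K →
      (∑ t ∈ Finset.range (K+1), if P t then a t else 0)
        = (∑ t ∈ Finset.range K, if P t ∧ P (t+1) then a (t+1) else 0) + a lo := by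
  intro K hK
  induction K, hK using Nat.le_induction with
  | base =>
    rw [Finset.sum_range_succ,
      Finset.sum_eq_zero (fun t ht => by rw [if_neg (hmin t (Finset.mem_range.mp ht))]),
      Finset.sum_eq_zero
        (fun t ht => by rw [if_neg (fun h => hmin t (Finset.mem_range.mp ht) h.1)]),
      if_pos hPlo, zero_add]
  | succ K hK ih =>
    rw [Finset.sum_range_succ, ih,
      Finset.sum_range_succ (f := fun t => if P t ∧ P (t+1) then a (t+1) else 0)]
    by_cases h : P (K+1)
    · rw [if_pos h, if_pos ⟨hdown K hK h, h⟩]; abel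
    · rw [if_neg h, if_neg (fun hc => h hc.2)]; abel

lemma split_pairs (g : Fin (n+1) → Fin (n+1) → ℤ) :
    (∑ i : Fin (n+1), ∑ j : Fin (n+1), if i < j then g i j else 0)
    = (∑ i : Fin n, ∑ j : Fin n, if i < j then g i.castSucc j.castSucc else 0)
      + ∑ i : Fin n, g i.castSucc (Fin.last n) := by
  rw [Fin.sum_univ_castSucc (f := fun i => ∑ j : Fin (n+1), if i < j then g i j else 0)]
  have h2 : (∑ j : Fin (n+1), if Fin.last n < j then g (Fin.last n) j else 0) = 0 :=
    Finset.sum_eq_zero fun j _ => if_neg (Fin.not_lt.mpr j.le_last)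
  rw [h2, add_zero]
  have h3 : ∀ i : Fin n, (∑ j : Fin (n+1), if i.castSucc < j then g i.castSucc j else 0)
      = (∑ j : Fin n, if i < j then g i.castSucc j.castSucc else 0) + g i.castSucc (Fin.last n) := by
    intro i
    rw [Fin.sum_univ_castSucc (f := fun j => if i.castSucc < j then g i.castSucc j else 0),
      if_pos (Fin.castSucc_lt_last i)]
    exact congrArg (· + g i.castSucc (Fin.last n))
      (Finset.sum_congr rfl fun j _ => if_congr Fin.castSucc_lt_castSucc_iff rfl rfl)
  rw [Finset.sum_congr rfl (fun i _ => h3 i), Finset.sum_add_distrib]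

/-- val-level description of `f` of insertions -/
lemma vf_inl_cs (o' : Surjs n) (t : Fin o'.k) (i : Fin n) :
    ((ins o' (Sum.inl t)).f i.castSucc : ℕ) = (o'.f i : ℕ) := by
  rw [f_ins_inl_castSucc]

lemma vf_inl_last (o' : Surjs n) (t : Fin o'.k) :
    ((ins o' (Sum.inl t)).f (Fin.last n) : ℕ) = (t : ℕ) := by
  rw [f_ins_inl_last]

lemma vf_inr_cs (o' : Surjs n) (t : Fin (o'.k+1)) (i : Fin n) :
    ((ins o' (Sum.inr t)).f i.castSucc : ℕ)
      = if (o'.f i : ℕ) < (t : ℕ) then (o'.f i : ℕ) else (o'.f i : ℕ) + 1 := by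
  rw [f_ins_inr_castSucc, val_succAbove]

lemma vf_inr_last (o' : Surjs n) (t : Fin (o'.k+1)) :
    ((ins o' (Sum.inr t)).f (Fin.last n) : ℕ) = (t : ℕ) := by
  rw [f_ins_inr_last]

def Aex (m : Fin (n+1) → Fin (n+1) → ℕ) (o' : Surjs n) (u : ℕ) : ℤ :=
  ∑ i : Fin n, (m i.castSucc (Fin.last n) : ℤ) * (if u ≤ (o'.f i : ℕ) then 1 else -1)

def Pex (q : Fin (n+1) → ℕ) (o' : Surjs n) (u : ℕ) : Prop :=
  (∀ i : Fin n, (o'.f i : ℕ) < u → q i.castSucc ≤ q (Fin.last n)) ∧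
  (∀ i : Fin n, u ≤ (o'.f i : ℕ) → q (Fin.last n) ≤ q i.castSucc)

def Refy {N : ℕ} (q : Fin N → ℕ) (o : Surjs N) : Prop :=
  ∀ x y, o.f x ≤ o.f y → q x ≤ q y

lemma wgt_ins_inl (m : Fin (n+1) → Fin (n+1) → ℕ) (o' : Surjs n) (t : Fin o'.k) :
    wgt m (ins o' (Sum.inl t))
      = wgt (fun i j => m i.castSucc j.castSucc) o' + Aex m o' ((t : ℕ) + 1) := by
  rw [wgt, split_pairs]
  congr 1
  · refine Finset.sum_congr rfl fun i _ => Finset.sum_congr rfl fun j _ => ?_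
    refine if_congr Iff.rfl ?_ rfl
    congr 1
    refine if_congr ?_ rfl rfl
    rw [Fin.lt_def, Fin.lt_def, vf_inl_cs, vf_inl_cs]
  · refine Finset.sum_congr rfl fun i _ => ?_
    congr 1
    refine if_congr ?_ rfl rfl
    rw [Fin.lt_def, vf_inl_cs, vf_inl_last]
    omega
  
lemma wgt_ins_inr (m : Fin (n+1) → Fin (n+1) → ℕ) (o' : Surjs n) (t : Fin (o'.k + 1)) :
    wgt m (ins o' (Sum.inr t))
      = wgt (fun i j => m i.castSucc j.castSucc) o' + Aex m o' (t : ℕ) := by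
  rw [wgt, split_pairs]
  congr 1
  · refine Finset.sum_congr rfl fun i _ => Finset.sum_congr rfl fun j _ => ?_
    refine if_congr Iff.rfl ?_ rfl
    congr 1
    refine if_congr ?_ rfl rfl
    rw [Fin.lt_def, Fin.lt_def, vf_inr_cs, vf_inr_cs]
    split_ifs <;> omega
  · refine Finset.sum_congr rfl fun i _ => ?_
    congr 1
    refine if_congr ?_ rfl rfl
    rw [Fin.lt_def, vf_inr_cs, vf_inr_last]
    split_ifs <;> omega

lemma refy_ins_inl (q : Fin (n+1) → ℕ) (o' : Surjs n) (t : Fin o'.k) :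
    Refy q (ins o' (Sum.inl t))
      ↔ Refy (fun i => q i.castSucc) o' ∧ (Pex q o' (t : ℕ) ∧ Pex q o' ((t : ℕ) + 1)) := by
  constructor
  · intro h
    refine ⟨fun x y hxy => ?_, ⟨fun i hi => ?_, fun i hi => ?_⟩, ⟨fun i hi => ?_, fun i hi => ?_⟩⟩
    · exact h x.castSucc y.castSucc
        (Fin.le_def.mpr (by rw [vf_inl_cs, vf_inl_cs]; exact Fin.le_def.mp hxy))
    · exact h i.castSucc (Fin.last n)
        (Fin.le_def.mpr (by rw [vf_inl_cs, vf_inl_last]; omega))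
    · exact h (Fin.last n) i.castSucc
        (Fin.le_def.mpr (by rw [vf_inl_cs, vf_inl_last]; omega))
    · exact h i.castSucc (Fin.last n)
        (Fin.le_def.mpr (by rw [vf_inl_cs, vf_inl_last]; omega))
    · exact h (Fin.last n) i.castSucc
        (Fin.le_def.mpr (by rw [vf_inl_cs, vf_inl_last]; omega))
  · rintro ⟨hR, ⟨-, hP2⟩, ⟨hQ1, -⟩⟩ x y hxy
    have hxy' := Fin.le_def.mp hxy
    induction x using Fin.lastCases with
    | last =>
      induction y using Fin.lastCases with
      | last => exact le_refl _
      | cast j =>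
        rw [vf_inl_last, vf_inl_cs] at hxy'
        exact hP2 j hxy'
    | cast i =>
      induction y using Fin.lastCases with
      | last =>
        rw [vf_inl_cs, vf_inl_last] at hxy'
        exact hQ1 i (by omega)
      | cast j =>
        rw [vf_inl_cs, vf_inl_cs] at hxy'
        exact hR i j (Fin.le_def.mpr hxy')

lemma refy_ins_inr (q : Fin (n+1) → ℕ) (o' : Surjs n) (t : Fin (o'.k + 1)) :
    Refy q (ins o' (Sum.inr t))
      ↔ Refy (fun i => q i.castSucc) o' ∧ Pex q o' (t : ℕ) := by
  constructor
  · intro h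
    refine ⟨fun x y hxy => ?_, fun i hi => ?_, fun i hi => ?_⟩
    · refine h x.castSucc y.castSucc
        (Fin.le_def.mpr (by rw [vf_inr_cs, vf_inr_cs]; have := Fin.le_def.mp hxy; split_ifs <;> omega))
    · exact h i.castSucc (Fin.last n)
        (Fin.le_def.mpr (by rw [vf_inr_cs, vf_inr_last]; split_ifs <;> omega))
    · exact h (Fin.last n) i.castSucc
        (Fin.le_def.mpr (by rw [vf_inr_cs, vf_inr_last]; split_ifs <;> omega))
  · rintro ⟨hR, hP1, hP2⟩ x y hxy
    have hxy' := Fin.le_def.mp hxy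
    induction x using Fin.lastCases with
    | last =>
      induction y using Fin.lastCases with
      | last => exact le_refl _
      | cast j =>
        rw [vf_inr_last, vf_inr_cs] at hxy'
        refine hP2 j ?_
        split_ifs at hxy' <;> omega
    | cast i =>
      induction y using Fin.lastCases with
      | last =>
        rw [vf_inr_cs, vf_inr_last] at hxy'
        refine hP1 i ?_
        split_ifs at hxy' <;> omega
      | cast j =>
        rw [vf_inr_cs, vf_inr_cs] at hxy'
        refine hR i j (Fin.le_def.mpr ?_)
        split_ifs at hxy' <;> omega

lemma lo_spec (q : Fin (n+1) → ℕ) (o' : Surjs n)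
    (hR' : Refy (fun i => q i.castSucc) o') :
    ∃ lo, lo ≤ o'.k ∧ Pex q o' lo ∧ (∀ u, u < lo → ¬ Pex q o' u) ∧
      (∀ u, lo ≤ u → Pex q o' (u+1) → Pex q o' u) ∧
      (∀ i : Fin n, (lo ≤ (o'.f i : ℕ)) ↔ (q (Fin.last n) ≤ q i.castSucc)) := by
  classical
  set Q : ℕ → Prop := fun u => ∀ i : Fin n, u ≤ (o'.f i : ℕ) → q (Fin.last n) ≤ q i.castSucc
    with hQ
  have hex : ∃ u, Q u := ⟨o'.k, fun i hi => absurd (o'.f i).isLt (by omega)⟩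
  set lo := Nat.find hex with hlo
  have hQlo : Q lo := Nat.find_spec hex
  have hQmin : ∀ u, u < lo → ¬ Q u := fun u hu => Nat.find_min hex hu
  have hfirst : ∀ i : Fin n, (o'.f i : ℕ) < lo → q i.castSucc ≤ q (Fin.last n) := by
    intro i hi
    have h1 : ¬ Q (o'.f i : ℕ) := hQmin _ hi
    simp only [hQ, Classical.not_imp, not_forall, not_le] at h1
    obtain ⟨i₁, hle, hlt⟩ := h1
    have h5 : q i.castSucc ≤ q i₁.castSucc := hR' i i₁ (Fin.le_def.mpr hle)
    omega
  have hPlo : Pex q o' lo := ⟨hfirst, hQlo⟩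
  refine ⟨lo, Nat.find_le (fun i hi => absurd (o'.f i).isLt (by omega)), hPlo, ?_, ?_, ?_⟩
  · exact fun u hu hP => hQmin u hu hP.2
  · intro u hu hP1
    exact ⟨fun i hi => hP1.1 i (by omega), fun i hi => hQlo i (by omega)⟩
  · intro i
    constructor
    · exact fun h => hQlo i h
    · intro h
      by_contra hcon
      push_neg at hcon
      have h2 := hfirst i hcon
      have h1 : ¬ Q (o'.f i : ℕ) := hQmin _ hcon
      simp only [hQ, Classical.not_imp, not_forall, not_le] at h1
      obtain ⟨i₁, hle, hlt⟩ := h1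
      have h5 : q i.castSucc ≤ q i₁.castSucc := hR' i i₁ (Fin.le_def.mpr hle)
      omega

end Surjs

open LaurentPolynomial in
theorem Surjs.key : ∀ n : ℕ, 1 ≤ n → ∀ (m : Fin n → Fin n → ℕ) (q : Fin n → ℕ),
    (∑ o : Surjs n, if Surjs.Refy q o then
        LaurentPolynomial.C ((-1:ℤ)^(o.k - 1)) * T (wgt m o) else 0)
    = LaurentPolynomial.C ((-1:ℤ)^(n-1)) *
        T (∑ i : Fin n, ∑ j : Fin n,
            if i < j then (m i j : ℤ) * (if q j ≤ q i then 1 else -1) else 0) := by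
  intro n hn
  induction n, hn using Nat.le_induction with
  | base =>
    intro m q
    have huniq : ∀ o₁ o₂ : Surjs 1, o₁ = o₂ := by
      intro o₁ o₂
      have hk : ∀ o : Surjs 1, o.k = 1 := by
        intro o
        have h1 := Surjs.k_pos o le_rfl
        have h2 : o.k < 2 := o.1.1.isLt
        omega
      refine Surjs.ext' ((hk o₁).trans (hk o₂).symm) (fun x => ?_)
      have h1 := (o₁.f x).isLt
      have h2 := (o₂.f x).isLt
      have h3 := hk o₁
      have h4 := hk o₂
      omega
    have hzero : ∀ (g : Fin 1 → Fin 1 → ℤ),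
        (∑ i : Fin 1, ∑ j : Fin 1, if i < j then g i j else 0) = 0 := fun g =>
      Finset.sum_eq_zero fun i _ => Finset.sum_eq_zero fun j _ =>
        if_neg (by rw [Subsingleton.elim i j]; exact lt_irrefl j)
    let o₀ : Surjs 1 := ⟨⟨⟨1, one_lt_two⟩, fun _ => ⟨0, Nat.zero_lt_one⟩⟩,
      fun y => ⟨0, Subsingleton.elim _ _⟩⟩
    rw [Fintype.sum_eq_single o₀ (fun b hb => absurd (huniq b o₀) hb),
      if_pos (show Surjs.Refy q o₀ from
        fun x y _ => le_of_eq (congrArg q (Subsingleton.elim x y))),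
      show wgt m o₀ = 0 from hzero _, hzero]
    rfl
  | succ n hn ih =>
    intro m q
    classical
    have hbij := Surjs.Ins_bijective (n := n)
    calc (∑ o : Surjs (n+1), if Surjs.Refy q o then
              LaurentPolynomial.C ((-1:ℤ)^(o.k - 1)) * T (wgt m o) else 0)
        = ∑ x : Σ o' : Surjs n, (Fin o'.k ⊕ Fin (o'.k + 1)),
            (if Surjs.Refy q (Surjs.ins x.1 x.2) then
              LaurentPolynomial.C ((-1:ℤ)^((Surjs.ins x.1 x.2).k - 1))
                * T (wgt m (Surjs.ins x.1 x.2)) else 0) :=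
          (Fintype.sum_bijective _ hbij _ _ (fun x => rfl)).symm
      _ = ∑ o' : Surjs n, ∑ d : Fin o'.k ⊕ Fin (o'.k + 1),
            (if Surjs.Refy q (Surjs.ins o' d) then
              LaurentPolynomial.C ((-1:ℤ)^((Surjs.ins o' d).k - 1))
                * T (wgt m (Surjs.ins o' d)) else 0) := by
          rw [← Finset.univ_sigma_univ, Finset.sum_sigma]
      _ = LaurentPolynomial.C ((-1:ℤ)^(n+1-1)) *
            T (∑ i : Fin (n+1), ∑ j : Fin (n+1),
              if i < j then (m i j : ℤ) * (if q j ≤ q i then 1 else -1) else 0) := ?_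
    have hinner : ∀ o' : Surjs n,
        (∑ d : Fin o'.k ⊕ Fin (o'.k + 1),
          (if Surjs.Refy q (Surjs.ins o' d) then
            LaurentPolynomial.C ((-1:ℤ)^((Surjs.ins o' d).k - 1))
              * T (wgt m (Surjs.ins o' d)) else 0))
        = if Surjs.Refy (fun i => q i.castSucc) o' then
            LaurentPolynomial.C ((-1:ℤ)^(o'.k)) *
              T (wgt (fun i j => m i.castSucc j.castSucc) o' +
                 ∑ i : Fin n, (m i.castSucc (Fin.last n) : ℤ) *
                   (if q (Fin.last n) ≤ q i.castSucc then 1 else -1)) else 0 := by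
      intro o'
      rw [Fintype.sum_sum_type]
      by_cases hR' : Surjs.Refy (fun i => q i.castSucc) o'
      · obtain ⟨lo, hloK, hPlo, hmin, hdown, hiff⟩ := Surjs.lo_spec q o' hR'
        have hk1 : 1 ≤ o'.k := Surjs.k_pos o' hn
        have hsig : ((-1:ℤ)^(o'.k)) = -((-1:ℤ)^(o'.k - 1)) := by
          conv_lhs => rw [show o'.k = (o'.k - 1) + 1 from by omega]
          rw [pow_succ]; ring
        have hAlo : Surjs.Aex m o' lo
            = ∑ i : Fin n, (m i.castSucc (Fin.last n) : ℤ) *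
                (if q (Fin.last n) ≤ q i.castSucc then 1 else -1) :=
          Finset.sum_congr rfl fun i _ => by
            exact congrArg _ (if_congr (hiff i) rfl rfl)
        have hinl : ∀ t : Fin o'.k,
            (if Surjs.Refy q (Surjs.ins o' (Sum.inl t)) then
              LaurentPolynomial.C ((-1:ℤ)^((Surjs.ins o' (Sum.inl t)).k - 1))
                * T (wgt m (Surjs.ins o' (Sum.inl t))) else 0)
            = (fun u : ℕ => -(if Surjs.Pex q o' u ∧ Surjs.Pex q o' (u+1) then
                LaurentPolynomial.C ((-1:ℤ)^(o'.k)) *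
                  T (wgt (fun i j => m i.castSucc j.castSucc) o' + Surjs.Aex m o' (u+1))
                else 0)) (t : ℕ) := by
          intro t
          show _ = -(if Surjs.Pex q o' (t:ℕ) ∧ Surjs.Pex q o' ((t:ℕ)+1) then
                LaurentPolynomial.C ((-1:ℤ)^(o'.k)) *
                  T (wgt (fun i j => m i.castSucc j.castSucc) o' + Surjs.Aex m o' ((t:ℕ)+1))
                else 0)
          rw [Surjs.k_ins_inl, Surjs.wgt_ins_inl]
          have hcnd : Surjs.Refy q (Surjs.ins o' (Sum.inl t))
              ↔ (Surjs.Pex q o' (t:ℕ) ∧ Surjs.Pex q o' ((t:ℕ)+1)) := by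
            rw [Surjs.refy_ins_inl]
            exact and_iff_right hR'
          rw [if_congr hcnd rfl rfl]
          split_ifs with h
          · rw [hsig, map_neg, neg_mul, neg_neg]
          · rw [neg_zero]
        have hinr : ∀ t : Fin (o'.k + 1),
            (if Surjs.Refy q (Surjs.ins o' (Sum.inr t)) then
              LaurentPolynomial.C ((-1:ℤ)^((Surjs.ins o' (Sum.inr t)).k - 1))
                * T (wgt m (Surjs.ins o' (Sum.inr t))) else 0)
            = (fun u : ℕ => if Surjs.Pex q o' u then
                LaurentPolynomial.C ((-1:ℤ)^(o'.k)) *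
                  T (wgt (fun i j => m i.castSucc j.castSucc) o' + Surjs.Aex m o' u)
                else 0) (t : ℕ) := by
          intro t
          show _ = if Surjs.Pex q o' (t:ℕ) then
                LaurentPolynomial.C ((-1:ℤ)^(o'.k)) *
                  T (wgt (fun i j => m i.castSucc j.castSucc) o' + Surjs.Aex m o' (t:ℕ))
                else 0
          rw [Surjs.k_ins_inr, Surjs.wgt_ins_inr, Nat.add_sub_cancel]
          have hcnd : Surjs.Refy q (Surjs.ins o' (Sum.inr t))
              ↔ Surjs.Pex q o' (t:ℕ) := by
            rw [Surjs.refy_ins_inr]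
            exact and_iff_right hR'
          rw [if_congr hcnd rfl rfl]
        rw [Finset.sum_congr rfl (fun t _ => hinl t),
          Finset.sum_congr rfl (fun t _ => hinr t),
          Fin.sum_univ_eq_sum_range (fun u : ℕ => -(if Surjs.Pex q o' u ∧ Surjs.Pex q o' (u+1) then
                LaurentPolynomial.C ((-1:ℤ)^(o'.k)) *
                  T (wgt (fun i j => m i.castSucc j.castSucc) o' + Surjs.Aex m o' (u+1))
                else 0)) o'.k,
          Fin.sum_univ_eq_sum_range (fun u : ℕ => if Surjs.Pex q o' u then
                LaurentPolynomial.C ((-1:ℤ)^(o'.k)) *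
                  T (wgt (fun i j => m i.castSucc j.castSucc) o' + Surjs.Aex m o' u)
                else 0) (o'.k + 1),
          Surjs.telescope (fun u : ℕ => LaurentPolynomial.C ((-1:ℤ)^(o'.k)) *
                  T (wgt (fun i j => m i.castSucc j.castSucc) o' + Surjs.Aex m o' u))
            (Surjs.Pex q o') lo hPlo hmin hdown o'.k hloK,
          Finset.sum_neg_distrib, hAlo, if_pos hR']
        abel
      · have hz1 : (∑ t : Fin o'.k,
            (if Surjs.Refy q (Surjs.ins o' (Sum.inl t)) then
              LaurentPolynomial.C ((-1:ℤ)^((Surjs.ins o' (Sum.inl t)).k - 1))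
                * T (wgt m (Surjs.ins o' (Sum.inl t))) else 0)) = 0 :=
          Finset.sum_eq_zero fun t _ =>
            if_neg (fun hc => hR' ((Surjs.refy_ins_inl q o' t).mp hc).1)
        have hz2 : (∑ t : Fin (o'.k + 1),
            (if Surjs.Refy q (Surjs.ins o' (Sum.inr t)) then
              LaurentPolynomial.C ((-1:ℤ)^((Surjs.ins o' (Sum.inr t)).k - 1))
                * T (wgt m (Surjs.ins o' (Sum.inr t))) else 0)) = 0 :=
          Finset.sum_eq_zero fun t _ =>
            if_neg (fun hc => hR' ((Surjs.refy_ins_inr q o' t).mp hc).1)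
        rw [hz1, hz2, add_zero, if_neg hR']
    rw [Finset.sum_congr rfl (fun o' _ => hinner o')]
    have hterm : ∀ o' : Surjs n,
        (if Surjs.Refy (fun i => q i.castSucc) o' then
            LaurentPolynomial.C ((-1:ℤ)^(o'.k)) *
              T (wgt (fun i j => m i.castSucc j.castSucc) o' +
                 ∑ i : Fin n, (m i.castSucc (Fin.last n) : ℤ) *
                   (if q (Fin.last n) ≤ q i.castSucc then 1 else -1)) else 0)
        = LaurentPolynomial.C (-1:ℤ) *
            ((if Surjs.Refy (fun i => q i.castSucc) o' then
              LaurentPolynomial.C ((-1:ℤ)^(o'.k - 1)) *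
                T (wgt (fun i j => m i.castSucc j.castSucc) o') else 0) *
             T (∑ i : Fin n, (m i.castSucc (Fin.last n) : ℤ) *
                   (if q (Fin.last n) ≤ q i.castSucc then 1 else -1))) := by
      intro o'
      have hk1 : 1 ≤ o'.k := Surjs.k_pos o' hn
      have hsig : ((-1:ℤ)^(o'.k)) = -((-1:ℤ)^(o'.k - 1)) := by
        conv_lhs => rw [show o'.k = (o'.k - 1) + 1 from by omega]
        rw [pow_succ]; ring
      split_ifs with h
      · rw [T_add, hsig, map_neg,
          show (LaurentPolynomial.C (-1:ℤ)) = -1 from by rw [map_neg, map_one]]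
        ring
      · rw [zero_mul, mul_zero]
    rw [Finset.sum_congr rfl (fun o' _ => hterm o'), ← Finset.mul_sum, ← Finset.sum_mul,
      ih (fun i j => m i.castSucc j.castSucc) (fun i => q i.castSucc)]
    have hv := Surjs.split_pairs
      (g := fun i j : Fin (n+1) => (m i j : ℤ) * (if q j ≤ q i then 1 else -1))
    beta_reduce at hv ⊢
    rw [hv, T_add]
    have hsig : ((-1:ℤ)^(n+1-1)) = (-1) * ((-1:ℤ)^(n - 1)) := by
      rw [Nat.add_sub_cancel]
      conv_lhs => rw [show n = (n-1) + 1 from by omega]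
      rw [pow_succ]; ring
    rw [hsig, map_mul]
    ring

/-- `Σ_{o refines p̄} (−1)^{k(o)−1} D^{−n_t(o)−n_a(o)+n_i(o)}
      = (−1)^{n−1} D^{n_t(p)+n_a(p)−n_i(p)}` in `ℤ[T, T⁻¹]`. -/
theorem offset_sum_cancellation (n : ℕ) (hn : 1 ≤ n) (m : Fin n → Fin n → ℕ)
    (p : Surjs n) :
    (∑ o : Surjs n,
        if o.Refines p.rev then
          LaurentPolynomial.C ((-1 : ℤ) ^ (o.k - 1)) * T (wgt m o)
        else 0) =
      LaurentPolynomial.C ((-1 : ℤ) ^ (n - 1)) * T (-(wgt m p)) := by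
  classical
  have hcond : ∀ o : Surjs n,
      o.Refines p.rev ↔ Surjs.Refy (fun i => ((p.rev.f i : ℕ))) o := by
    intro o
    constructor
    · intro hr x y hxy
      exact Fin.le_def.mp (hr x y hxy)
    · intro hr x y hxy
      exact Fin.le_def.mpr (hr x y hxy)
  rw [Finset.sum_congr rfl (fun o (_ : o ∈ Finset.univ) =>
    if_congr (hcond o) rfl rfl), Surjs.key n hn m (fun i => ((p.rev.f i : ℕ)))]
  have hexp : (∑ i : Fin n, ∑ j : Fin n,
      if i < j then (m i j : ℤ) *
        (if ((p.rev.f j : ℕ)) ≤ ((p.rev.f i : ℕ)) then 1 else -1) else 0)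
      = -(wgt m p) := by
    rw [wgt, ← Finset.sum_neg_distrib]
    refine Finset.sum_congr rfl fun i _ => ?_
    rw [← Finset.sum_neg_distrib]
    refine Finset.sum_congr rfl fun j _ => ?_
    by_cases hij : i < j
    · rw [if_pos hij, if_pos hij]
      have h1 : ((p.rev.f j : ℕ)) = p.k - ((p.f j : ℕ) + 1) := Fin.val_rev _
      have h2 : ((p.rev.f i : ℕ)) = p.k - ((p.f i : ℕ) + 1) := Fin.val_rev _
      have h3 := (p.f i).isLt
      have h4 := (p.f j).isLt
      by_cases hb : (p.f j : ℕ) < (p.f i : ℕ)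
      · rw [if_pos (Fin.lt_def.mpr hb),
          if_neg (show ¬ ((p.rev.f j : ℕ)) ≤ ((p.rev.f i : ℕ)) from by omega)]
        ring
      · rw [if_neg (fun hc => hb (Fin.lt_def.mp hc)),
          if_pos (show ((p.rev.f j : ℕ)) ≤ ((p.rev.f i : ℕ)) from by omega)]
        ring
    · rw [if_neg hij, if_neg hij, neg_zero]
  rw [hexp]
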